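/- Let X : Ω → ℝ^d be measurable with law μ := X♯ℙ, and let A : ℝ^d → ℝ^{d×d}, B : ℝ^d × ℝ^d → ℝ^{d×d} be bounded measurable. Define T̃ on L²_ℙ(Ω;ℝ^d) by (T̃H)(ω) := A(X(ω))H(ω) + ∫_Ω B(X(ω),X(θ))H(θ) dℙ(θ), and T_μ on L²_μ(ℝ^d;ℝ^d) by (T_μξ)(x) := A(x)ξ(x) + ∫_{ℝ^d} B(x,y)ξ(y) dμ(y). If T_μ is injective, then every H ∈ L²_ℙ(Ω;ℝ^d) with T̃H = 0 satisfies 𝔼[H | σ(X)] = 0 ℙ-almost everywhere. -/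

import Mathlib

open MeasureTheory

/-- `ℝ^d` as a Euclidean space. -/
abbrev Ed (d : ℕ) : Type := EuclideanSpace ℝ (Fin d)

theorem coord_abs_le_norm' {d : ℕ} (w : Ed d) (i : Fin d) : |w i| ≤ ‖w‖ := by
  rw [EuclideanSpace.norm_eq, ← Real.sqrt_sq_eq_abs]
  refine Real.sqrt_le_sqrt ?_
  simpa [Real.norm_eq_abs, sq_abs] using
    Finset.single_le_sum (f := fun j => ‖w j‖ ^ 2) (fun j _ => sq_nonneg _) (Finset.mem_univ i)

theorem clm_apply_coord' {d : ℕ} (T : Ed d →L[ℝ] Ed d) (v : Ed d) (i : Fin d) :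
    T v i = ∑ j, T (EuclideanSpace.single j (1:ℝ)) i * v j := by
  have hv := (EuclideanSpace.basisFun (Fin d) ℝ).sum_repr v
  conv_lhs => rw [← hv]
  rw [map_sum, WithLp.ofLp_sum]
  simp [EuclideanSpace.basisFun_apply, mul_comm]

theorem aux_condexp_clm {Ω : Type*} {m m0 : MeasurableSpace Ω} {ℙ : Measure Ω}
    {E F : Type*}
    [NormedAddCommGroup E] [NormedSpace ℝ E] [CompleteSpace E]
    [NormedAddCommGroup F] [NormedSpace ℝ F] [CompleteSpace F]
    (hm : m ≤ m0) [IsFiniteMeasure ℙ]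
    (T : E →L[ℝ] F) {f : Ω → E} (hf : Integrable f ℙ) :
    ℙ[fun a => T (f a)|m] =ᵐ[ℙ] fun a => T ((ℙ[f|m]) a) := by
  refine (ae_eq_condExp_of_forall_setIntegral_eq hm (T.integrable_comp hf)
    (fun s _ _ => (T.integrable_comp integrable_condExp).integrableOn)
    (fun s hs hμs => ?_) ?_).symm
  · rw [T.integral_comp_comm integrable_condExp.integrableOn,
      setIntegral_condExp hm hf hs, ← T.integral_comp_comm hf.integrableOn]
  · exact ⟨fun a => T ((ℙ[f|m]) a),
      T.continuous.comp_stronglyMeasurable stronglyMeasurable_condExp,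
      Filter.EventuallyEq.rfl⟩

theorem aux_condexp_pullout {Ω : Type*} {m0 : MeasurableSpace Ω} {ℙ : Measure Ω}
    [IsProbabilityMeasure ℙ] {d : ℕ}
    {X : Ω → Ed d} (hX : Measurable X)
    (φ : Ed d → Ed d →L[ℝ] Ed d)
    (hφm : Measurable fun p : Ed d × Ed d => φ p.1 p.2)
    {C : ℝ} (hφb : ∀ x, ‖φ x‖ ≤ C)
    {D : Ω → Ed d} (hD : Integrable D ℙ)
    (hD0 : ℙ[D | MeasurableSpace.comap X inferInstance] =ᵐ[ℙ] 0) :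
    ℙ[(fun ω => φ (X ω) (D ω)) | MeasurableSpace.comap X inferInstance] =ᵐ[ℙ] 0 := by
  set m : MeasurableSpace Ω := MeasurableSpace.comap X inferInstance with hm_def
  have hm : m ≤ m0 := hX.comap_le
  have hXm : Measurable[m] X := Measurable.of_comap_le le_rfl
  set b : Fin d → Fin d → Ed d → ℝ :=
    fun i j x => φ x (EuclideanSpace.single j (1:ℝ)) i with hb
  have hbmeas : ∀ i j, Measurable (b i j) := by
    intro i j
    have h1 : Measurable fun x : Ed d => φ x (EuclideanSpace.single j (1:ℝ)) :=
      hφm.comp (measurable_id.prodMk measurable_const)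
    exact ((EuclideanSpace.proj i).continuous.measurable).comp h1
  have hbbd : ∀ i j x, |b i j x| ≤ C := by
    intro i j x
    refine (coord_abs_le_norm' _ i).trans ?_
    calc ‖φ x (EuclideanSpace.single j (1:ℝ))‖
        ≤ ‖φ x‖ * ‖EuclideanSpace.single j (1:ℝ)‖ := (φ x).le_opNorm _
      _ = ‖φ x‖ := by rw [EuclideanSpace.norm_single, norm_one, mul_one]
      _ ≤ C := hφb x
  have hDj : ∀ j, Integrable (fun ω => D ω j) ℙ := fun j => by
    simpa using ((EuclideanSpace.proj j : Ed d →L[ℝ] ℝ)).integrable_comp hD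
  have hDj0 : ∀ j, ℙ[fun ω => D ω j|m] =ᵐ[ℙ] 0 := by
    intro j
    refine (aux_condexp_clm hm (EuclideanSpace.proj j) hD).trans ?_
    filter_upwards [hD0] with ω hω
    simp [hω]
  have hterm : ∀ i j, ℙ[fun ω => b i j (X ω) * D ω j|m] =ᵐ[ℙ] 0 := by
    intro i j
    have hf_meas : StronglyMeasurable[m] (fun ω => b i j (X ω)) :=
      ((hbmeas i j).comp hXm).stronglyMeasurable
    have hint : Integrable (fun ω => b i j (X ω) * D ω j) ℙ := by
      refine Integrable.mono' ((hDj j).abs.const_mul C)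
        ((((hbmeas i j).comp hX).aemeasurable.aestronglyMeasurable).mul (hDj j).1) ?_
      filter_upwards with ω
      rw [Real.norm_eq_abs, abs_mul]
      exact mul_le_mul_of_nonneg_right (hbbd i j (X ω)) (abs_nonneg _)
    have h1 : ℙ[(fun ω => b i j (X ω)) * (fun ω => D ω j)|m]
        =ᵐ[ℙ] (fun ω => b i j (X ω)) * ℙ[fun ω => D ω j|m] :=
      condExp_mul_of_stronglyMeasurable_left hf_meas hint (hDj j)
    refine h1.trans ?_
    filter_upwards [hDj0 j] with ω hω
    simp only [Pi.mul_apply, hω, Pi.zero_apply, mul_zero]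
  have hGint : Integrable (fun ω => φ (X ω) (D ω)) ℙ := by
    refine Integrable.mono' (hD.norm.const_mul C)
      ((hφm.comp_aemeasurable
        ((hX.aemeasurable).prodMk hD.1.aemeasurable)).aestronglyMeasurable) ?_
    filter_upwards with ω
    calc ‖φ (X ω) (D ω)‖ ≤ ‖φ (X ω)‖ * ‖D ω‖ := (φ (X ω)).le_opNorm _
      _ ≤ C * ‖D ω‖ := mul_le_mul_of_nonneg_right (hφb (X ω)) (norm_nonneg _)
  have hcoord : ∀ i, ℙ[fun ω => φ (X ω) (D ω) i|m] =ᵐ[ℙ] 0 := by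
    intro i
    have hGsum : (fun ω => φ (X ω) (D ω) i)
        = ∑ j, (fun ω => b i j (X ω) * D ω j) := by
      funext ω
      rw [Finset.sum_apply]
      exact clm_apply_coord' _ _ _
    rw [hGsum]
    refine (condExp_finsetSum (fun j _ => ?_) m).trans ?_
    · refine Integrable.mono' ((hDj j).abs.const_mul C)
        ((((hbmeas i j).comp hX).aemeasurable.aestronglyMeasurable).mul (hDj j).1) ?_
      filter_upwards with ω
      rw [Real.norm_eq_abs, abs_mul]
      exact mul_le_mul_of_nonneg_right (hbbd i j (X ω)) (abs_nonneg _)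
    · filter_upwards [Filter.eventually_all.2 (fun j => hterm i j)] with ω hω
      rw [Finset.sum_apply]
      simp only [Pi.zero_apply]
      exact Finset.sum_eq_zero fun j _ => hω j
  have hGc : ∀ i, (fun ω => (ℙ[(fun ω => φ (X ω) (D ω))|m]) ω i) =ᵐ[ℙ] 0 := fun i =>
    ((aux_condexp_clm hm (EuclideanSpace.proj i) hGint).symm).trans (hcoord i)
  filter_upwards [Filter.eventually_all.2 hGc] with ω hω
  ext i
  simpa using hω i

theorem aux_integral_pullout {Ω : Type*} {m0 : MeasurableSpace Ω} {ℙ : Measure Ω}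
    [IsProbabilityMeasure ℙ] {d : ℕ}
    {X : Ω → Ed d} (hX : Measurable X)
    (φ : Ed d → Ed d →L[ℝ] Ed d)
    (hφm : Measurable fun p : Ed d × Ed d => φ p.1 p.2)
    {C : ℝ} (hφb : ∀ x, ‖φ x‖ ≤ C)
    {D : Ω → Ed d} (hD : Integrable D ℙ)
    (hD0 : ℙ[D | MeasurableSpace.comap X inferInstance] =ᵐ[ℙ] 0) :
    ∫ ω, φ (X ω) (D ω) ∂ℙ = 0 := by
  have h := aux_condexp_pullout hX φ hφm hφb hD hD0
  rw [← integral_condExp hX.comap_le (f := fun ω => φ (X ω) (D ω))]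
  exact integral_eq_zero_of_ae h

/-- If the Eulerian multiplication-plus-kernel operator `T_μ` is injective on `L²_μ`,
then any `H ∈ L²_ℙ` in the kernel of its lift `T̃` has vanishing conditional
expectation with respect to `σ(X)`. -/
theorem condexp_eq_zero_of_lifted_kernel_of_injective
    {Ω : Type*} [MeasurableSpace Ω] {d : ℕ}
    (ℙ : Measure Ω) [IsProbabilityMeasure ℙ]
    (X : Ω → Ed d) (hX : Measurable X)
    (A : Ed d → Ed d →L[ℝ] Ed d) (B : Ed d → Ed d → Ed d →L[ℝ] Ed d)
    (hAmeas : Measurable fun p : Ed d × Ed d => A p.1 p.2)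
    (hBmeas : Measurable fun p : (Ed d × Ed d) × Ed d => B p.1.1 p.1.2 p.2)
    (hAbd : ∃ CA : ℝ, ∀ x, ‖A x‖ ≤ CA)
    (hBbd : ∃ CB : ℝ, ∀ x y, ‖B x y‖ ≤ CB)
    (hinj : ∀ ξ : Ed d → Ed d, MemLp ξ 2 (Measure.map X ℙ) →
      ((fun x => A x (ξ x) + ∫ y, B x y (ξ y) ∂(Measure.map X ℙ))
          =ᵐ[Measure.map X ℙ] 0) →
      ξ =ᵐ[Measure.map X ℙ] 0) :
    ∀ H : Ω → Ed d, MemLp H 2 ℙ →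
      ((fun ω => A (X ω) (H ω) + ∫ θ, B (X ω) (X θ) (H θ) ∂ℙ) =ᵐ[ℙ] 0) →
      ℙ[H | MeasurableSpace.comap X inferInstance] =ᵐ[ℙ] 0 := by
  obtain ⟨CA, hCA⟩ := hAbd
  obtain ⟨CB, hCB⟩ := hBbd
  suffices h : ∀ H : Ω → Ed d, StronglyMeasurable H → MemLp H 2 ℙ →
      ((fun ω => A (X ω) (H ω) + ∫ θ, B (X ω) (X θ) (H θ) ∂ℙ) =ᵐ[ℙ] 0) →
      ℙ[H | MeasurableSpace.comap X inferInstance] =ᵐ[ℙ] 0 by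
    intro H hH hker
    obtain ⟨H', hH'sm, hHH'⟩ := hH.1
    have hint : ∀ x : Ed d, ∫ θ, B x (X θ) (H θ) ∂ℙ = ∫ θ, B x (X θ) (H' θ) ∂ℙ := by
      intro x
      refine integral_congr_ae ?_
      filter_upwards [hHH'] with θ hθ
      rw [hθ]
    have hker' : (fun ω => A (X ω) (H' ω) + ∫ θ, B (X ω) (X θ) (H' θ) ∂ℙ) =ᵐ[ℙ] 0 := by
      filter_upwards [hker, hHH'] with ω h1 h2
      rw [← h2, ← hint (X ω)]
      exact h1
    exact (condExp_congr_ae hHH').trans (h H' hH'sm (hH.ae_eq hHH') hker')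
  intro H hHsm hH hker
  have hm : MeasurableSpace.comap X inferInstance ≤ ‹MeasurableSpace Ω› := hX.comap_le
  have hXm : Measurable[MeasurableSpace.comap X inferInstance] X := Measurable.of_comap_le le_rfl
  haveI : IsProbabilityMeasure (Measure.map X ℙ) := Measure.isProbabilityMeasure_map hX.aemeasurable
  have hHi : Integrable H ℙ := hH.integrable one_le_two
  -- the conditional-expectation factor ξ, via the conditional distribution
  set ξ : Ed d → Ed d := fun x => ∫ y, y ∂(ProbabilityTheory.condDistrib H X ℙ x) with hξ_def
  have hξsm : StronglyMeasurable ξ := by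
    have hid : StronglyMeasurable (fun p : Ed d × Ed d => p.2) :=
      measurable_snd.stronglyMeasurable
    exact hid.integral_kernel_prod_right' (κ := ProbabilityTheory.condDistrib H X ℙ)
  have hcond : ℙ[H|MeasurableSpace.comap X inferInstance] =ᵐ[ℙ] fun ω => ξ (X ω) :=
    ProbabilityTheory.condExp_ae_eq_integral_condDistrib' hX hHi
  have hξXi : Integrable (fun ω => ξ (X ω)) ℙ := integrable_condExp.congr hcond
  -- ℙ[H|m] is in L², via condexpL2
  have hL2 : MemLp (ℙ[H|MeasurableSpace.comap X inferInstance]) 2 ℙ := by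
    have hg : ((condExpL2 (Ed d) ℝ hm (hH.toLp H) :
        lpMeas (Ed d) ℝ (MeasurableSpace.comap X inferInstance) 2 ℙ) : Ω → Ed d) =ᵐ[ℙ] ℙ[H|MeasurableSpace.comap X inferInstance] := by
      refine ae_eq_condExp_of_forall_setIntegral_eq hm hHi
        (fun s _ _ => ((Lp.memLp _).integrable one_le_two).integrableOn)
        (fun s hs hμs => ?_) ?_
      · rw [integral_condExpL2_eq hm (hH.toLp H) hs hμs.ne]
        exact setIntegral_congr_ae (hm s hs) ((hH.coeFn_toLp).mono fun ω h _ => h)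
      · exact lpMeas.aestronglyMeasurable _
    exact (Lp.memLp _).ae_eq hg
  have hξ2 : MemLp ξ 2 (Measure.map X ℙ) := by
    rw [memLp_map_measure_iff hξsm.aestronglyMeasurable hX.aemeasurable]
    exact hL2.ae_eq hcond
  -- the centered variable D
  set D : Ω → Ed d := H - fun ω => ξ (X ω) with hD_def
  have hDapp : ∀ ω, D ω = H ω - ξ (X ω) := fun ω => rfl
  have hDi : Integrable D ℙ := hHi.sub hξXi
  have hD0 : ℙ[D|MeasurableSpace.comap X inferInstance] =ᵐ[ℙ] 0 := by
    have h1 : ℙ[D|MeasurableSpace.comap X inferInstance] =ᵐ[ℙ] ℙ[H|MeasurableSpace.comap X inferInstance] - ℙ[fun ω => ξ (X ω)|MeasurableSpace.comap X inferInstance] :=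
      condExp_sub hHi hξXi _
    have h2 : ℙ[fun ω => ξ (X ω)|MeasurableSpace.comap X inferInstance] = fun ω => ξ (X ω) :=
      condExp_of_stronglyMeasurable hm
        (hξsm.comp_measurable hXm :
          StronglyMeasurable[MeasurableSpace.comap X inferInstance] fun ω => ξ (X ω)) hξXi
    filter_upwards [h1, hcond] with ω hω1 hω2
    rw [hω1, Pi.sub_apply, h2, hω2, Pi.zero_apply, sub_self]
  -- the B-kernel identity
  have hBxmeas : ∀ x : Ed d, Measurable fun p : Ed d × Ed d => B x p.1 p.2 := fun x =>
    hBmeas.comp (((measurable_const.prodMk measurable_fst)).prodMk measurable_snd)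
  have hkey : ∀ x : Ed d,
      ∫ θ, B x (X θ) (H θ) ∂ℙ = ∫ y, B x y (ξ y) ∂(Measure.map X ℙ) := by
    intro x
    have hzero : ∫ θ, B x (X θ) (D θ) ∂ℙ = 0 :=
      aux_integral_pullout hX (B x) (hBxmeas x) (fun y => hCB x y) hDi hD0
    have hDint' : Integrable (fun θ => B x (X θ) (D θ)) ℙ := by
      refine Integrable.mono' (hDi.norm.const_mul CB)
        (((hBxmeas x).comp_aemeasurable
          ((hX.aemeasurable).prodMk hDi.1.aemeasurable)).aestronglyMeasurable) ?_
      filter_upwards with θ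
      calc ‖B x (X θ) (D θ)‖ ≤ ‖B x (X θ)‖ * ‖D θ‖ := (B x (X θ)).le_opNorm _
        _ ≤ CB * ‖D θ‖ := mul_le_mul_of_nonneg_right (hCB x (X θ)) (norm_nonneg _)
    have hξXint : Integrable (fun θ => B x (X θ) (ξ (X θ))) ℙ := by
      refine Integrable.mono' (hξXi.norm.const_mul CB)
        (((hBxmeas x).comp_aemeasurable
          ((hX.aemeasurable).prodMk hξXi.1.aemeasurable)).aestronglyMeasurable) ?_
      filter_upwards with θ
      calc ‖B x (X θ) (ξ (X θ))‖ ≤ ‖B x (X θ)‖ * ‖ξ (X θ)‖ := (B x (X θ)).le_opNorm _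
        _ ≤ CB * ‖ξ (X θ)‖ := mul_le_mul_of_nonneg_right (hCB x (X θ)) (norm_nonneg _)
    have hsplit : ∫ θ, B x (X θ) (H θ) ∂ℙ = ∫ θ, B x (X θ) (ξ (X θ)) ∂ℙ := by
      have hfe : (fun θ => B x (X θ) (H θ))
          = fun θ => B x (X θ) (D θ) + B x (X θ) (ξ (X θ)) := by
        funext θ
        rw [← map_add]
        congr 1
        rw [hDapp θ, sub_add_cancel]
      rw [hfe, integral_add hDint' hξXint, hzero, zero_add]
    have hgmeas : AEStronglyMeasurable (fun y => B x y (ξ y)) (Measure.map X ℙ) := by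
      have hmg : Measurable fun y : Ed d => B x y (ξ y) :=
        (hBxmeas x).comp (measurable_id.prodMk hξsm.measurable)
      exact hmg.aestronglyMeasurable
    rw [hsplit]
    exact (integral_map hX.aemeasurable hgmeas).symm
  -- conditional expectation of the A-term
  have hADint : Integrable (fun ω => A (X ω) (D ω)) ℙ := by
    refine Integrable.mono' (hDi.norm.const_mul CA)
      ((hAmeas.comp_aemeasurable
        ((hX.aemeasurable).prodMk hDi.1.aemeasurable)).aestronglyMeasurable) ?_
    filter_upwards with ω
    calc ‖A (X ω) (D ω)‖ ≤ ‖A (X ω)‖ * ‖D ω‖ := (A (X ω)).le_opNorm _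
      _ ≤ CA * ‖D ω‖ := mul_le_mul_of_nonneg_right (hCA (X ω)) (norm_nonneg _)
  have hAξint : Integrable (fun ω => A (X ω) (ξ (X ω))) ℙ := by
    refine Integrable.mono' (hξXi.norm.const_mul CA)
      ((hAmeas.comp_aemeasurable
        ((hX.aemeasurable).prodMk hξXi.1.aemeasurable)).aestronglyMeasurable) ?_
    filter_upwards with ω
    calc ‖A (X ω) (ξ (X ω))‖ ≤ ‖A (X ω)‖ * ‖ξ (X ω)‖ := (A (X ω)).le_opNorm _
      _ ≤ CA * ‖ξ (X ω)‖ := mul_le_mul_of_nonneg_right (hCA (X ω)) (norm_nonneg _)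
  have hAterm : ℙ[fun ω => A (X ω) (H ω)|MeasurableSpace.comap X inferInstance]
      =ᵐ[ℙ] fun ω => A (X ω) (ξ (X ω)) := by
    have hsplit : (fun ω => A (X ω) (H ω))
        = (fun ω => A (X ω) (D ω)) + (fun ω => A (X ω) (ξ (X ω))) := by
      funext ω
      rw [Pi.add_apply, ← map_add]
      congr 1
      rw [hDapp ω, sub_add_cancel]
    rw [hsplit]
    refine (condExp_add hADint hAξint _).trans ?_
    have h1 : ℙ[fun ω => A (X ω) (D ω)|MeasurableSpace.comap X inferInstance] =ᵐ[ℙ] 0 :=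
      aux_condexp_pullout hX A hAmeas hCA hDi hD0
    have h2 : ℙ[fun ω => A (X ω) (ξ (X ω))|MeasurableSpace.comap X inferInstance] = fun ω => A (X ω) (ξ (X ω)) := by
      have hmeas : Measurable fun x : Ed d => A x (ξ x) :=
        hAmeas.comp (measurable_id.prodMk hξsm.measurable)
      exact condExp_of_stronglyMeasurable hm
        ((hmeas.comp hXm).stronglyMeasurable :
          StronglyMeasurable[MeasurableSpace.comap X inferInstance] fun ω => A (X ω) (ξ (X ω))) hAξint
    filter_upwards [h1] with ω hω
    rw [Pi.add_apply, hω, h2, Pi.zero_apply, zero_add]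
  -- measurability and integrability of the lifted B-term
  have hcsm : StronglyMeasurable (fun x : Ed d => ∫ θ, B x (X θ) (H θ) ∂ℙ) := by
    have hsm : StronglyMeasurable (fun p : Ed d × Ω => B p.1 (X p.2) (H p.2)) := by
      refine Measurable.stronglyMeasurable ?_
      exact hBmeas.comp (((measurable_fst.prodMk (hX.comp measurable_snd))).prodMk
        (hHsm.measurable.comp measurable_snd))
    exact hsm.integral_prod_right' (ν := ℙ)
  have hcXi : Integrable (fun ω => ∫ θ, B (X ω) (X θ) (H θ) ∂ℙ) ℙ := by
    refine Integrable.mono' (integrable_const (CB * ∫ θ, ‖H θ‖ ∂ℙ))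
      ((hcsm.comp_measurable hX).aestronglyMeasurable) ?_
    filter_upwards with ω
    calc ‖∫ θ, B (X ω) (X θ) (H θ) ∂ℙ‖ ≤ ∫ θ, ‖B (X ω) (X θ) (H θ)‖ ∂ℙ :=
          norm_integral_le_integral_norm _
      _ ≤ ∫ θ, CB * ‖H θ‖ ∂ℙ := by
          refine integral_mono_of_nonneg (Filter.Eventually.of_forall fun _ => norm_nonneg _)
            (hHi.norm.const_mul CB) (Filter.Eventually.of_forall fun θ => ?_)
          calc ‖B (X ω) (X θ) (H θ)‖ ≤ ‖B (X ω) (X θ)‖ * ‖H θ‖ := (B (X ω) (X θ)).le_opNorm _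
            _ ≤ CB * ‖H θ‖ := mul_le_mul_of_nonneg_right (hCB (X ω) (X θ)) (norm_nonneg _)
      _ = CB * ∫ θ, ‖H θ‖ ∂ℙ := integral_const_mul _ _
  -- the main a.e. identity
  have hmain : (fun ω => A (X ω) (ξ (X ω)))
      =ᵐ[ℙ] fun ω => -(∫ θ, B (X ω) (X θ) (H θ) ∂ℙ) := by
    have hAc : (fun ω => A (X ω) (H ω))
        =ᵐ[ℙ] fun ω => -(∫ θ, B (X ω) (X θ) (H θ) ∂ℙ) := by
      filter_upwards [hker] with ω hω
      have hz : A (X ω) (H ω) + ∫ θ, B (X ω) (X θ) (H θ) ∂ℙ = 0 := hω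
      exact eq_neg_of_add_eq_zero_left hz
    have h2 : ℙ[fun ω => -(∫ θ, B (X ω) (X θ) (H θ) ∂ℙ)|MeasurableSpace.comap X inferInstance]
        = fun ω => -(∫ θ, B (X ω) (X θ) (H θ) ∂ℙ) :=
      condExp_of_stronglyMeasurable hm
        (((hcsm.comp_measurable hXm).neg :
          StronglyMeasurable[MeasurableSpace.comap X inferInstance] fun ω => -(∫ θ, B (X ω) (X θ) (H θ) ∂ℙ))) hcXi.neg
    calc (fun ω => A (X ω) (ξ (X ω)))
        =ᵐ[ℙ] ℙ[fun ω => A (X ω) (H ω)|MeasurableSpace.comap X inferInstance] := hAterm.symm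
      _ =ᵐ[ℙ] ℙ[fun ω => -(∫ θ, B (X ω) (X θ) (H θ) ∂ℙ)|MeasurableSpace.comap X inferInstance] := condExp_congr_ae hAc
      _ =ᵐ[ℙ] fun ω => -(∫ θ, B (X ω) (X θ) (H θ) ∂ℙ) := by rw [h2]
  have hEul : ∀ᵐ ω ∂ℙ,
      A (X ω) (ξ (X ω)) + ∫ y, B (X ω) y (ξ y) ∂(Measure.map X ℙ) = 0 := by
    filter_upwards [hmain] with ω hω
    rw [← hkey (X ω), hω, neg_add_cancel]
  -- transfer to the law μ
  have hksm : StronglyMeasurable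
      (fun x : Ed d => A x (ξ x) + ∫ y, B x y (ξ y) ∂(Measure.map X ℙ)) := by
    have h1 : StronglyMeasurable fun x : Ed d => A x (ξ x) :=
      (hAmeas.comp (measurable_id.prodMk hξsm.measurable)).stronglyMeasurable
    have h2 : StronglyMeasurable (fun p : Ed d × Ed d => B p.1 p.2 (ξ p.2)) := by
      refine Measurable.stronglyMeasurable ?_
      exact hBmeas.comp ((measurable_fst.prodMk measurable_snd).prodMk
        (hξsm.measurable.comp measurable_snd))
    exact h1.add (h2.integral_prod_right' (ν := Measure.map X ℙ))
  have hset : MeasurableSet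
      {x : Ed d | A x (ξ x) + ∫ y, B x y (ξ y) ∂(Measure.map X ℙ) = 0} :=
    hksm.measurableSet_eq_fun stronglyMeasurable_const
  have hEulμ : (fun x => A x (ξ x) + ∫ y, B x y (ξ y) ∂(Measure.map X ℙ))
      =ᵐ[Measure.map X ℙ] 0 := by
    have h := (ae_map_iff hX.aemeasurable hset).mpr hEul
    filter_upwards [h] with x hx
    simpa using hx
  have hξ0 : ξ =ᵐ[Measure.map X ℙ] 0 := hinj ξ hξ2 hEulμ
  have hξset : MeasurableSet {y : Ed d | ξ y = 0} :=
    hξsm.measurableSet_eq_fun stronglyMeasurable_const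
  have hξ0' : ∀ᵐ y ∂(Measure.map X ℙ), ξ y = 0 := by
    filter_upwards [hξ0] with y hy
    simpa using hy
  have hξX0 : (fun ω => ξ (X ω)) =ᵐ[ℙ] 0 := by
    have h := (ae_map_iff hX.aemeasurable hξset).mp hξ0'
    filter_upwards [h] with ω hω
    simpa using hω
  exact hcond.trans hξX0
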